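/- arXiv:1702.05016 — 2 statements merged into one kernel-verified Lean document; each statement's English description precedes it below -/
import Mathlib

section
/- Let r, s, a, b, c, d, m, n be integers with (r,s) ≠ (0,0). Then det([a-1, c; b, d-1]) = 0 and det([rm+a-1, sm+c; rn+b, sn+d-1]) = 0 if and only if either (i) the vectors (a-1,b), (c,d-1), (m,n) all lie in a common cyclic subgroup of ℤ², or (ii) s·(a-1,b) = r·(c,d-1). -/
private lemma aux1 (g1 g2 x y : ℤ) (hg : IsCoprime g1 g2) (h : g1 * y = g2 * x) :
    ∃ t : ℤ, x = t * g1 ∧ y = t * g2 := by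
  rcases eq_or_ne g1 0 with h0 | h0
  · subst h0
    have hu : IsUnit g2 := isCoprime_zero_left.mp hg
    rcases Int.isUnit_iff.mp hu with h2 | h2 <;> subst h2
    · exact ⟨y, by omega, by omega⟩
    · exact ⟨-y, by omega, by omega⟩
  · have hdvd : g1 ∣ g2 * x := ⟨y, h.symm⟩
    have hx : g1 ∣ x := hg.dvd_of_dvd_mul_left hdvd
    obtain ⟨t, ht⟩ := hx
    refine ⟨t, by rw [ht, mul_comm], ?_⟩
    have h2 : g1 * y = g1 * (t * g2) := by rw [h, ht]; ring
    exact mul_left_cancel₀ h0 h2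

private lemma exists_prim (x y : ℤ) (h : ¬(x = 0 ∧ y = 0)) :
    ∃ g1 g2 e : ℤ, IsCoprime g1 g2 ∧ x = e * g1 ∧ y = e * g2 := by
  have hg : 0 < Int.gcd x y := by
    rcases Nat.eq_zero_or_pos (Int.gcd x y) with h0 | h0
    · rw [Int.gcd_eq_zero_iff] at h0; exact absurd h0 h
    · exact h0
  refine ⟨x / Int.gcd x y, y / Int.gcd x y, Int.gcd x y, ?_, ?_, ?_⟩
  · rw [Int.isCoprime_iff_gcd_eq_one]
    exact Int.gcd_div_gcd_div_gcd hg
  · exact (Int.mul_ediv_cancel' (Int.gcd_dvd_left x y)).symm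
  · exact (Int.mul_ediv_cancel' (Int.gcd_dvd_right x y)).symm

theorem stmt_10 (r s a b c d m n : ℤ) (hrs : (r, s) ≠ (0, 0)) :
    ((a - 1) * (d - 1) - c * b = 0 ∧
        (r * m + a - 1) * (s * n + d - 1) - (s * m + c) * (r * n + b) = 0) ↔
      ((∃ g : ℤ × ℤ, (∃ k : ℤ, (a - 1, b) = k • g) ∧ (∃ k : ℤ, (c, d - 1) = k • g) ∧
          (∃ k : ℤ, (m, n) = k • g)) ∨
        s • (a - 1, b) = r • (c, d - 1)) := by
  have hrs' : r ≠ 0 ∨ s ≠ 0 := by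
    by_contra hc
    push_neg at hc
    exact hrs (by simp [hc.1, hc.2])
  constructor
  · rintro ⟨h1, h2⟩
    have h2' : r * (m * (d - 1) - n * c) + s * (n * (a - 1) - m * b) = 0 := by
      linear_combination h2 - h1
    by_cases hAC : (a - 1 = 0 ∧ b = 0) ∧ (c = 0 ∧ d - 1 = 0)
    · left
      refine ⟨(m, n), ⟨0, ?_⟩, ⟨0, ?_⟩, ⟨1, ?_⟩⟩ <;>
        simp [Prod.ext_iff, smul_eq_mul] <;> omega
    · obtain ⟨g1, g2, e, t, hg, hA1, hA2, hC1, hC2⟩ :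
          ∃ g1 g2 e t : ℤ, IsCoprime g1 g2 ∧
            a - 1 = e * g1 ∧ b = e * g2 ∧ c = t * g1 ∧ d - 1 = t * g2 := by
        by_cases hA0 : a - 1 = 0 ∧ b = 0
        · obtain ⟨g1, g2, t, hg, hc1, hc2⟩ := exists_prim c (d - 1) (by tauto)
          exact ⟨g1, g2, 0, t, hg, by omega, by omega, hc1, hc2⟩
        · obtain ⟨g1, g2, e, hg, ha1, ha2⟩ := exists_prim (a - 1) b hA0
          have he : e ≠ 0 := by
            rintro rfl
            simp at ha1 ha2
            exact hA0 ⟨ha1, ha2⟩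
          have hdet : e * (g1 * (d - 1)) = e * (g2 * c) := by
            linear_combination h1 - (d - 1) * ha1 + c * ha2
          obtain ⟨t, ht1, ht2⟩ := aux1 g1 g2 c (d - 1) hg (mul_left_cancel₀ he hdet)
          exact ⟨g1, g2, e, t, hg, ha1, ha2, ht1, ht2⟩
      have key : (r * t - s * e) * (m * g2 - n * g1) = 0 := by
        linear_combination h2' - r * m * hC2 + r * n * hC1 - s * n * hA1 + s * m * hA2
      rcases mul_eq_zero.mp key with hk | hk
      · right
        simp only [Prod.smul_mk, smul_eq_mul, Prod.mk.injEq]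
        constructor
        · linear_combination s * hA1 - r * hC1 - g1 * hk
        · linear_combination s * hA2 - r * hC2 - g2 * hk
      · have hmn : g1 * n = g2 * m := by linarith
        obtain ⟨u, hu1, hu2⟩ := aux1 g1 g2 m n hg hmn
        left
        refine ⟨(g1, g2), ⟨e, ?_⟩, ⟨t, ?_⟩, ⟨u, ?_⟩⟩ <;>
          simp only [Prod.smul_mk, smul_eq_mul, Prod.mk.injEq] <;>
          exact ⟨by linarith, by linarith⟩
  · rintro (⟨⟨g1, g2⟩, ⟨k1, hk1⟩, ⟨k2, hk2⟩, ⟨k3, hk3⟩⟩ | hii)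
    · simp only [Prod.smul_mk, smul_eq_mul, Prod.mk.injEq] at hk1 hk2 hk3
      obtain ⟨e1, e2⟩ := hk1
      obtain ⟨e3, e4⟩ := hk2
      obtain ⟨e5, e6⟩ := hk3
      have ha : a = k1 * g1 + 1 := by omega
      have hd : d = k2 * g2 + 1 := by omega
      subst ha hd e2 e3 e5 e6
      constructor <;> ring
    · simp only [Prod.smul_mk, smul_eq_mul, Prod.mk.injEq] at hii
      obtain ⟨e1, e2⟩ := hii
      have hdet : (a - 1) * (d - 1) - c * b = 0 := by
        rcases hrs' with hr | hs
        · have : r * ((a - 1) * (d - 1) - c * b) = 0 := by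
            linear_combination b * e1 - (a - 1) * e2
          exact (mul_eq_zero.mp this).resolve_left hr
        · have : s * ((a - 1) * (d - 1) - c * b) = 0 := by
            linear_combination (d - 1) * e1 - c * e2
          exact (mul_eq_zero.mp this).resolve_left hs
      refine ⟨hdet, ?_⟩
      have h2' : r * (m * (d - 1) - n * c) + s * (n * (a - 1) - m * b) = 0 := by
        rcases hrs' with hr | hs
        · have : r * (r * (m * (d - 1) - n * c) + s * (n * (a - 1) - m * b)) = 0 := by
            linear_combination r * n * e1 - r * m * e2
          exact (mul_eq_zero.mp this).resolve_left hr
        · have : s * (r * (m * (d - 1) - n * c) + s * (n * (a - 1) - m * b)) = 0 := by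
            linear_combination s * n * e1 - s * m * e2
          exact (mul_eq_zero.mp this).resolve_left hs
      linear_combination h2' + hdet
end

section
/- Let F be the free group on generators u, v. For each pair of integers (p, q) with p ∈ {0,1} or q ∈ {0,1}, and for the group P given by the presentation with generators B, u, v, x, y and relations xux⁻¹ = u, xvx⁻¹ = v[v⁻¹,u]B⁻¹[u,v⁻¹], xBx⁻¹ = u[v⁻¹,u]B[u,v⁻¹]u⁻¹, yuy⁻¹ = v[v⁻¹,u]Buv⁻¹, yvy⁻¹ = v, yBy⁻¹ = uvu⁻¹Buv⁻¹u⁻¹, the elements (x^p y^q)^k and (u^p v^q)^l commute in P for all integers k, l. -/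
/-- Generators of the presentation of `P₂(T²∖{1})`. -/
inductive Gen | B | u | v | x | y
  deriving DecidableEq

open Gen commutatorElement in
/-- The relators of the presentation of `P₂(T²∖{1})` (Proposition 5.2):
each relation `LHS = RHS` is recorded as the relator `LHS * RHS⁻¹`. -/
def rels : Set (FreeGroup Gen) :=
  letI B : FreeGroup Gen := FreeGroup.of Gen.B
  letI u : FreeGroup Gen := FreeGroup.of Gen.u
  letI v : FreeGroup Gen := FreeGroup.of Gen.v
  letI x : FreeGroup Gen := FreeGroup.of Gen.x
  letI y : FreeGroup Gen := FreeGroup.of Gen.y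
  { x * u * x⁻¹ * u⁻¹,
    x * v * x⁻¹ * (v * ⁅v⁻¹, u⁆ * B⁻¹ * ⁅u, v⁻¹⁆)⁻¹,
    x * B * x⁻¹ * (u * ⁅v⁻¹, u⁆ * B * ⁅u, v⁻¹⁆ * u⁻¹)⁻¹,
    y * u * y⁻¹ * (v * ⁅v⁻¹, u⁆ * B * u * v⁻¹)⁻¹,
    y * v * y⁻¹ * v⁻¹,
    y * B * y⁻¹ * (u * v * u⁻¹ * B * u * v⁻¹ * u⁻¹)⁻¹ }

/-- The group `P₂(T²∖{1})` given by the above presentation. -/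
abbrev P : Type := PresentedGroup rels


namespace Stmt13Aux

open commutatorElement

abbrev X : P := PresentedGroup.of (rels := rels) Gen.x
abbrev Y : P := PresentedGroup.of (rels := rels) Gen.y
abbrev U : P := PresentedGroup.of (rels := rels) Gen.u
abbrev V : P := PresentedGroup.of (rels := rels) Gen.v
abbrev Bg : P := PresentedGroup.of (rels := rels) Gen.B

lemma rel_one {r : FreeGroup Gen} (hr : r ∈ rels) : PresentedGroup.mk rels r = 1 := by
  change (QuotientGroup.mk r : P) = 1
  rw [QuotientGroup.eq_one_iff]
  exact Subgroup.subset_normalClosure hr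

lemma mk_of (g : Gen) : PresentedGroup.mk rels (FreeGroup.of g) = PresentedGroup.of g := rfl

/-- `A = u v u⁻¹ B`. -/
def A : P := U * V * U⁻¹ * Bg
/-- `E = u⁻¹ A⁻¹ v`. -/
def E : P := U⁻¹ * A⁻¹ * V

lemma r1 : X * U * X⁻¹ = U := by
  have h := rel_one (show (FreeGroup.of Gen.x * FreeGroup.of Gen.u * (FreeGroup.of Gen.x)⁻¹ *
      (FreeGroup.of Gen.u)⁻¹) ∈ rels from Set.mem_insert _ _)
  simp only [map_mul, map_inv, mk_of] at h
  exact mul_inv_eq_one.mp h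

lemma r2 : X * V * X⁻¹ = V * ⁅V⁻¹, U⁆ * Bg⁻¹ * ⁅U, V⁻¹⁆ := by
  have h := rel_one (show (FreeGroup.of Gen.x * FreeGroup.of Gen.v * (FreeGroup.of Gen.x)⁻¹ *
      (FreeGroup.of Gen.v * ⁅(FreeGroup.of Gen.v)⁻¹, FreeGroup.of Gen.u⁆ * (FreeGroup.of Gen.B)⁻¹ *
       ⁅FreeGroup.of Gen.u, (FreeGroup.of Gen.v)⁻¹⁆)⁻¹) ∈ rels by
    simp only [rels]; right; left; rfl)
  simp only [map_mul, map_inv, mk_of, commutatorElement_def] at h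
  simpa only [commutatorElement_def] using mul_inv_eq_one.mp h

lemma r3 : X * Bg * X⁻¹ = U * ⁅V⁻¹, U⁆ * Bg * ⁅U, V⁻¹⁆ * U⁻¹ := by
  have h := rel_one (show (FreeGroup.of Gen.x * FreeGroup.of Gen.B * (FreeGroup.of Gen.x)⁻¹ *
      (FreeGroup.of Gen.u * ⁅(FreeGroup.of Gen.v)⁻¹, FreeGroup.of Gen.u⁆ * FreeGroup.of Gen.B *
       ⁅FreeGroup.of Gen.u, (FreeGroup.of Gen.v)⁻¹⁆ * (FreeGroup.of Gen.u)⁻¹)⁻¹) ∈ rels by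
    simp only [rels]; right; right; left; rfl)
  simp only [map_mul, map_inv, mk_of, commutatorElement_def] at h
  simpa only [commutatorElement_def] using mul_inv_eq_one.mp h

lemma r4 : Y * U * Y⁻¹ = V * ⁅V⁻¹, U⁆ * Bg * U * V⁻¹ := by
  have h := rel_one (show (FreeGroup.of Gen.y * FreeGroup.of Gen.u * (FreeGroup.of Gen.y)⁻¹ *
      (FreeGroup.of Gen.v * ⁅(FreeGroup.of Gen.v)⁻¹, FreeGroup.of Gen.u⁆ * FreeGroup.of Gen.B *
       FreeGroup.of Gen.u * (FreeGroup.of Gen.v)⁻¹)⁻¹) ∈ rels by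
    simp only [rels]; right; right; right; left; rfl)
  simp only [map_mul, map_inv, mk_of, commutatorElement_def] at h
  simpa only [commutatorElement_def] using mul_inv_eq_one.mp h

lemma r5 : Y * V * Y⁻¹ = V := by
  have h := rel_one (show (FreeGroup.of Gen.y * FreeGroup.of Gen.v * (FreeGroup.of Gen.y)⁻¹ *
      (FreeGroup.of Gen.v)⁻¹) ∈ rels by
    simp only [rels]; right; right; right; right; left; rfl)
  simp only [map_mul, map_inv, mk_of] at h
  exact mul_inv_eq_one.mp h

lemma r6 : Y * Bg * Y⁻¹ = U * V * U⁻¹ * Bg * U * V⁻¹ * U⁻¹ := by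
  have h := rel_one (show (FreeGroup.of Gen.y * FreeGroup.of Gen.B * (FreeGroup.of Gen.y)⁻¹ *
      (FreeGroup.of Gen.u * FreeGroup.of Gen.v * (FreeGroup.of Gen.u)⁻¹ * FreeGroup.of Gen.B *
       FreeGroup.of Gen.u * (FreeGroup.of Gen.v)⁻¹ * (FreeGroup.of Gen.u)⁻¹)⁻¹) ∈ rels by
    simp only [rels]; right; right; right; right; right; rfl)
  simp only [map_mul, map_inv, mk_of] at h
  exact mul_inv_eq_one.mp h

noncomputable def φ : MulAut P := MulAut.conj X
noncomputable def ψ : MulAut P := MulAut.conj Y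

lemma φU : φ U = U := by rw [φ, MulAut.conj_apply]; exact r1
lemma φV : φ V = U * V * E := by
  rw [φ, MulAut.conj_apply, r2]
  simp only [E, A, commutatorElement_def]; group
lemma φA : φ A = U * V * U⁻¹ := by
  simp only [A, φ, MulAut.conj_apply]
  have : X * (U * V * U⁻¹ * Bg) * X⁻¹ =
      (X*U*X⁻¹) * (X*V*X⁻¹) * (X*U*X⁻¹)⁻¹ * (X*Bg*X⁻¹) := by group
  rw [this, r1, r2, r3]
  simp only [commutatorElement_def]; group
lemma φE : φ E = E := by
  have : φ E = (φ U)⁻¹ * (φ A)⁻¹ * (φ V) := by simp only [E, map_mul, map_inv]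
  rw [this, φU, φA, φV]
  simp only [E]; group
lemma ψV : ψ V = V := by rw [ψ, MulAut.conj_apply]; exact r5
lemma ψU : ψ U = A * U * V⁻¹ := by
  rw [ψ, MulAut.conj_apply, r4]
  simp only [A, commutatorElement_def]; group
lemma ψA : ψ A = A := by
  simp only [A, ψ, MulAut.conj_apply]
  have : Y * (U * V * U⁻¹ * Bg) * Y⁻¹ =
      (Y*U*Y⁻¹) * (Y*V*Y⁻¹) * (Y*U*Y⁻¹)⁻¹ * (Y*Bg*Y⁻¹) := by group
  rw [this, r4, r5, r6]
  simp only [commutatorElement_def]; group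

lemma commXU : Commute X U := by
  have h := r1
  calc X * U = (X * U * X⁻¹) * X := by group
    _ = U * X := by rw [h]

lemma commYV : Commute Y V := by
  have h := r5
  calc Y * V = (Y * V * Y⁻¹) * Y := by group
    _ = V * Y := by rw [h]

lemma commXE : Commute X E := by
  have h : X * E * X⁻¹ = E := φE
  calc X * E = (X * E * X⁻¹) * X := by group
    _ = E * X := by rw [h]

lemma φsU : φ.symm U = U := by
  rw [MulEquiv.symm_apply_eq, φU]
lemma φsE : φ.symm E = E := by
  rw [MulEquiv.symm_apply_eq, φE]
lemma φsV : φ.symm V = U⁻¹ * V * E⁻¹ := by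
  rw [MulEquiv.symm_apply_eq]
  simp only [map_mul, map_inv, φU, φV, φE]
  group
lemma ψsV : ψ.symm V = V := by rw [MulEquiv.symm_apply_eq, ψV]
lemma ψsA : ψ.symm A = A := by rw [MulEquiv.symm_apply_eq, ψA]
lemma ψsU : ψ.symm U = A⁻¹ * U * V := by
  rw [MulEquiv.symm_apply_eq]
  simp only [map_mul, map_inv, ψU, ψA, ψV]
  group

lemma key2 : ∀ r : ℤ, X ^ r * V * X ^ (-r) = U ^ r * V * E ^ r := by
  intro r
  induction r using Int.induction_on with
  | zero => simp
  | succ n ih =>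
    have h1 : X ^ ((n : ℤ) + 1) * V * X ^ (-((n : ℤ) + 1)) =
        φ (X ^ (n : ℤ) * V * X ^ (-(n : ℤ))) := by
      simp only [φ, MulAut.conj_apply]; group
    rw [h1, ih, map_mul, map_mul, map_zpow, map_zpow, φU, φV, φE]
    group
  | pred n ih =>
    have h1 : X ^ (-(n : ℤ) - 1) * V * X ^ (-(-(n : ℤ) - 1)) =
        φ.symm (X ^ (-(n : ℤ)) * V * X ^ (-(-(n : ℤ)))) := by
      simp only [φ, MulAut.conj_symm_apply]; group
    rw [h1, ih, map_mul, map_mul, map_zpow, map_zpow, φsU, φsV, φsE]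
    group

lemma key1 : ∀ r : ℤ, Y ^ r * U * Y ^ (-r) = A ^ r * U * V ^ (-r) := by
  intro r
  induction r using Int.induction_on with
  | zero => simp
  | succ n ih =>
    have h1 : Y ^ ((n : ℤ) + 1) * U * Y ^ (-((n : ℤ) + 1)) =
        ψ (Y ^ (n : ℤ) * U * Y ^ (-(n : ℤ))) := by
      simp only [ψ, MulAut.conj_apply]; group
    rw [h1, ih, map_mul, map_mul, map_zpow, map_zpow, ψA, ψU, ψV]
    group
  | pred n ih =>
    have h1 : Y ^ (-(n : ℤ) - 1) * U * Y ^ (-(-(n : ℤ) - 1)) =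
        ψ.symm (Y ^ (-(n : ℤ)) * U * Y ^ (-(-(n : ℤ)))) := by
      simp only [ψ, MulAut.conj_symm_apply]; group
    rw [h1, ih, map_mul, map_mul, map_zpow, map_zpow, ψsA, ψsU, ψsV]
    group

lemma lemP1 (q : ℤ) : Commute (X * Y ^ q) (U * V ^ q) := by
  have hy : Y ^ q * (U * V ^ q) * Y ^ (-q) = A ^ q * U := by
    have hv : Y ^ q * V ^ q * Y ^ (-q) = V ^ q := by
      have := (commYV.zpow_zpow q q).eq
      calc Y ^ q * V ^ q * Y ^ (-q) = (Y ^ q * V ^ q) * Y ^ (-q) := by group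
        _ = (V ^ q * Y ^ q) * Y ^ (-q) := by rw [this]
        _ = V ^ q := by group
    calc Y ^ q * (U * V ^ q) * Y ^ (-q)
        = (Y ^ q * U * Y ^ (-q)) * (Y ^ q * V ^ q * Y ^ (-q)) := by group
      _ = (A ^ q * U * V ^ (-q)) * V ^ q := by rw [key1 q, hv]
      _ = A ^ q * U := by group
  have hx : X * (A ^ q * U) * X⁻¹ = U * V ^ q := by
    have h1 : X * (A ^ q * U) * X⁻¹ = φ (A ^ q * U) := by
      simp only [φ, MulAut.conj_apply]
    rw [h1, map_mul, map_zpow, φA, φU]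
    have h2 : (U * V * U⁻¹) ^ q = U * V ^ q * U⁻¹ := by
      rw [← MulAut.conj_apply, ← map_zpow, MulAut.conj_apply]
    rw [h2]; group
  have key : (X * Y ^ q) * (U * V ^ q) * (X * Y ^ q)⁻¹ = U * V ^ q := by
    calc (X * Y ^ q) * (U * V ^ q) * (X * Y ^ q)⁻¹
        = X * (Y ^ q * (U * V ^ q) * Y ^ (-q)) * X⁻¹ := by group
      _ = X * (A ^ q * U) * X⁻¹ := by rw [hy]
      _ = U * V ^ q := hx
  calc (X * Y ^ q) * (U * V ^ q)
      = ((X * Y ^ q) * (U * V ^ q) * (X * Y ^ q)⁻¹) * (X * Y ^ q) := by group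
    _ = (U * V ^ q) * (X * Y ^ q) := by rw [key]

lemma lemQ1 (p : ℤ) : Commute (X ^ p * Y) (U ^ p * V) := by
  have hy : Y * (U ^ p * V) * Y⁻¹ = V * E ^ (-p) := by
    have h1 : Y * (U ^ p * V) * Y⁻¹ = ψ (U ^ p * V) := by
      simp only [ψ, MulAut.conj_apply]
    rw [h1, map_mul, map_zpow, ψU, ψV]
    have hAUV : A * U * V⁻¹ = V * E⁻¹ * V⁻¹ := by
      simp only [E, A]; group
    rw [hAUV]
    have h2 : (V * E⁻¹ * V⁻¹) ^ p = V * (E⁻¹) ^ p * V⁻¹ := by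
      rw [← MulAut.conj_apply, ← map_zpow, MulAut.conj_apply]
    rw [h2]; group
  have hx : X ^ p * (V * E ^ (-p)) * X ^ (-p) = U ^ p * V := by
    have hE : X ^ p * E ^ (-p) * X ^ (-p) = E ^ (-p) := by
      have := (commXE.zpow_zpow p (-p)).eq
      calc X ^ p * E ^ (-p) * X ^ (-p) = (X ^ p * E ^ (-p)) * X ^ (-p) := by group
        _ = (E ^ (-p) * X ^ p) * X ^ (-p) := by rw [this]
        _ = E ^ (-p) := by group
    calc X ^ p * (V * E ^ (-p)) * X ^ (-p)
        = (X ^ p * V * X ^ (-p)) * (X ^ p * E ^ (-p) * X ^ (-p)) := by group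
      _ = (U ^ p * V * E ^ p) * E ^ (-p) := by rw [key2 p, hE]
      _ = U ^ p * V := by group
  have key : (X ^ p * Y) * (U ^ p * V) * (X ^ p * Y)⁻¹ = U ^ p * V := by
    calc (X ^ p * Y) * (U ^ p * V) * (X ^ p * Y)⁻¹
        = X ^ p * (Y * (U ^ p * V) * Y⁻¹) * X ^ (-p) := by group
      _ = X ^ p * (V * E ^ (-p)) * X ^ (-p) := by rw [hy]
      _ = U ^ p * V := hx
  calc (X ^ p * Y) * (U ^ p * V)
      = ((X ^ p * Y) * (U ^ p * V) * (X ^ p * Y)⁻¹) * (X ^ p * Y) := by group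
    _ = (U ^ p * V) * (X ^ p * Y) := by rw [key]

end Stmt13Aux

open Stmt13Aux in
theorem stmt_13 (p q k l : ℤ) (h : (p = 0 ∨ p = 1) ∨ (q = 0 ∨ q = 1)) :
    Commute
      (((PresentedGroup.of (rels := rels) Gen.x) ^ p *
          (PresentedGroup.of (rels := rels) Gen.y) ^ q) ^ k)
      (((PresentedGroup.of (rels := rels) Gen.u) ^ p *
          (PresentedGroup.of (rels := rels) Gen.v) ^ q) ^ l) := by
  rcases h with (rfl | rfl) | (rfl | rfl)
  · simp only [zpow_zero, one_mul]
    exact (commYV.zpow_zpow q q).zpow_zpow k l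
  · simp only [zpow_one]
    exact (lemP1 q).zpow_zpow k l
  · simp only [zpow_zero, mul_one]
    exact (commXU.zpow_zpow p p).zpow_zpow k l
  · simp only [zpow_one]
    exact (lemQ1 p).zpow_zpow k l
end
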